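/- Let n ≥ 6, let L be a 3-uniform list assignment of the prism graph Π_n, and let c be a lex-min proper L-coloring of Π_n whose largest color class (Blue) has more than ⌈2n/3⌉ vertices. Let Red denote a largest color class among the remaining colors. If |Red| = |Blue| or |Red| = |Blue| − 1, then every color class of c other than Blue and Red has at most |Red| − 2 vertices (and hence at most |Blue| − 2 vertices). -/

import Mathlib

/-- The prism graph `Π_n = C_n □ K_2`, on vertex set `Fin n × Fin 2`:
`(i,j)` is adjacent to `(i',j')` iff `i = i'` and `j ≠ j'`, or `j = j'` and
`i' − i ≡ ±1 (mod n)`. -/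
def prism (n : ℕ) : SimpleGraph (Fin n × Fin 2) :=
  SimpleGraph.fromRel (fun v w =>
    (v.1 = w.1 ∧ v.2 ≠ w.2) ∨ (v.2 = w.2 ∧ w.1.val = (v.1.val + 1) % n))

/-- `c` is a proper `L`-coloring of the prism graph `Π_n`. -/
def IsProperListColoring {n : ℕ} (L : Fin n × Fin 2 → Finset ℕ)
    (c : Fin n × Fin 2 → ℕ) : Prop :=
  (∀ v, c v ∈ L v) ∧ ∀ v w, (prism n).Adj v w → c v ≠ c w

/-- The color class of color `k` under the coloring `c`. -/
def colorClass {n : ℕ} (c : Fin n × Fin 2 → ℕ) (k : ℕ) : Finset (Fin n × Fin 2) :=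
  Finset.univ.filter (fun v => c v = k)

/-- The color word of `c`: the sizes of the nonempty color classes of `c`,
listed in decreasing order. -/
def colorWord {n : ℕ} (c : Fin n × Fin 2 → ℕ) : List ℕ :=
  (((Finset.univ.image c).val.map (fun k => (colorClass c k).card)).sort (· ≤ ·)).reverse

/-- `c` is a lex-min proper `L`-coloring: it is a proper `L`-coloring and no proper
`L`-coloring has a lexicographically smaller color word. -/
def IsLexMin {n : ℕ} (L : Fin n × Fin 2 → Finset ℕ) (c : Fin n × Fin 2 → ℕ) : Prop :=
  IsProperListColoring L c ∧
    ∀ c', IsProperListColoring L c' → ¬ List.Lex (· < ·) (colorWord c') (colorWord c)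

/- ## Auxiliary lemmas -/

lemma colorWord_eq_rev {n : ℕ} (c : Fin n × Fin 2 → ℕ) (l : List ℕ)
    (hl : l.Pairwise (· ≤ ·))
    (hperm : ((Finset.univ.image c).val.map (fun k => (colorClass c k).card))
      = ↑l.reverse) :
    colorWord c = l.reverse := by
  unfold colorWord
  congr 1
  refine List.Perm.eq_of_pairwise' (Multiset.pairwise_sort ..) hl ?_
  have h : (↑(((Finset.univ.image c).val.map (fun k => (colorClass c k).card)).sort (· ≤ ·))
      : Multiset ℕ) = ↑l.reverse := by rw [Multiset.sort_eq, hperm]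
  exact (Multiset.coe_eq_coe.mp h).trans (List.reverse_perm l)

lemma card_range_mod (t s : ℕ) (hs : s < 3) :
    ((Finset.range (3*t)).filter (fun i => i % 3 = s)).card = t := by
  induction t with
  | zero => simp
  | succ t ih =>
    have h3 : 3*(t+1) = (3*t + 2) + 1 := by ring
    rw [h3, Finset.range_add_one, show 3*t+2 = (3*t+1)+1 by ring, Finset.range_add_one,
      show 3*t+1 = (3*t)+1 by ring, Finset.range_add_one]
    rw [Finset.filter_insert, Finset.filter_insert, Finset.filter_insert]
    interval_cases s
    · have e0 : (3*t) % 3 = 0 := by omega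
      have e1 : (3*t+1) % 3 ≠ 0 := by omega
      have e2 : (3*t+2) % 3 ≠ 0 := by omega
      rw [if_neg e2, if_neg e1, if_pos e0,
        Finset.card_insert_of_notMem (by simp only [Finset.mem_filter, Finset.mem_range]; omega), ih]
    · have e0 : (3*t) % 3 ≠ 1 := by omega
      have e1 : (3*t+1) % 3 = 1 := by omega
      have e2 : (3*t+2) % 3 ≠ 1 := by omega
      rw [if_neg e2, if_pos e1, if_neg e0,
        Finset.card_insert_of_notMem (by simp only [Finset.mem_filter, Finset.mem_range]; omega), ih]
    · have e0 : (3*t) % 3 ≠ 2 := by omega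
      have e1 : (3*t+1) % 3 ≠ 2 := by omega
      have e2 : (3*t+2) % 3 = 2 := by omega
      rw [if_pos e2, if_neg e1, if_neg e0,
        Finset.card_insert_of_notMem (by simp only [Finset.mem_filter, Finset.mem_range]; omega), ih]

lemma card_fin_filter {n : ℕ} (R : ℕ → Prop) [DecidablePred R] :
    ((Finset.univ : Finset (Fin n)).filter (fun i => R i.val)).card
      = ((Finset.range n).filter R).card := by
  apply Finset.card_bij (fun i _ => i.val)
  · intro a ha
    simp only [Finset.mem_filter, Finset.mem_range, Finset.mem_univ, true_and] at ha ⊢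
    exact ⟨a.isLt, ha⟩
  · intro a _ a' _ h; exact Fin.val_injective h
  · intro j hj; simp only [Finset.mem_filter, Finset.mem_range] at hj
    exact ⟨⟨j, hj.1⟩, by simp [hj.2], rfl⟩

lemma card_prod_filter {n : ℕ} (P : Fin n × Fin 2 → Prop) [DecidablePred P] :
    (Finset.univ.filter P).card
      = ((Finset.univ : Finset (Fin n)).filter (fun i => P (i,0))).card
        + ((Finset.univ : Finset (Fin n)).filter (fun i => P (i,1))).card := by
  rw [Finset.card_eq_sum_card_fiberwise (f := Prod.snd) (t := Finset.univ)
    (fun x _ => Finset.mem_univ _)]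
  rw [Fin.sum_univ_two]
  congr 1
  · apply Finset.card_bij (fun v _ => v.1)
    · intro a ha; simp only [Finset.mem_filter, Finset.mem_univ, true_and] at ha ⊢
      obtain ⟨h1, h2⟩ := ha
      have : a = (a.1, 0) := by rw [← h2]
      rwa [this] at h1
    · intro a ha a' ha' h
      simp only [Finset.mem_filter, Finset.mem_univ, true_and] at ha ha'
      exact Prod.ext h (ha.2.trans ha'.2.symm)
    · intro i hi; simp only [Finset.mem_filter, Finset.mem_univ, true_and] at hi
      exact ⟨(i, 0), by simp [hi], rfl⟩
  · apply Finset.card_bij (fun v _ => v.1)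
    · intro a ha; simp only [Finset.mem_filter, Finset.mem_univ, true_and] at ha ⊢
      obtain ⟨h1, h2⟩ := ha
      have : a = (a.1, 1) := by rw [← h2]
      rwa [this] at h1
    · intro a ha a' ha' h
      simp only [Finset.mem_filter, Finset.mem_univ, true_and] at ha ha'
      exact Prod.ext h (ha.2.trans ha'.2.symm)
    · intro i hi; simp only [Finset.mem_filter, Finset.mem_univ, true_and] at hi
      exact ⟨(i, 1), by simp [hi], rfl⟩

lemma card_pattern {n : ℕ} (hn3 : n % 3 = 0) (s : ℕ) (hs : s < 3) :
    ((Finset.univ : Finset (Fin n × Fin 2)).filter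
      (fun v => (v.1.val + v.2.val) % 3 = s)).card = 2 * (n / 3) := by
  rw [card_prod_filter]
  have key : ∀ s', s' < 3 → ((Finset.range n).filter (fun i => i % 3 = s')).card = n / 3 := by
    intro s' hs'
    have h := card_range_mod (n/3) s' hs'
    rwa [show 3 * (n/3) = n by omega] at h
  have h0 : ((Finset.univ : Finset (Fin n)).filter
      (fun i => (i.val + ((0 : Fin 2)).val) % 3 = s)).card = n / 3 := by
    rw [card_fin_filter (fun i => (i + ((0 : Fin 2)).val) % 3 = s)]
    rw [Finset.filter_congr (q := fun i => i % 3 = s) (fun i _ => by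
      show (i + ((0 : Fin 2)).val) % 3 = s ↔ i % 3 = s
      norm_num)]
    exact key s hs
  have h1 : ((Finset.univ : Finset (Fin n)).filter
      (fun i => (i.val + ((1 : Fin 2)).val) % 3 = s)).card = n / 3 := by
    rw [card_fin_filter (fun i => (i + ((1 : Fin 2)).val) % 3 = s)]
    rw [Finset.filter_congr (q := fun i => i % 3 = (s+2) % 3) (fun i _ => by
      show (i + ((1 : Fin 2)).val) % 3 = s ↔ i % 3 = (s+2) % 3
      have h1v : ((1 : Fin 2)).val = 1 := rfl
      rw [h1v]; omega)]
    exact key ((s+2) % 3) (by omega)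
  rw [h0, h1]; omega


/- ## Pattern coloring -/

def pat (b r k s : ℕ) : ℕ := if s = 0 then b else if s = 1 then r else k

lemma pat_eq_b {b r k s : ℕ} (hbr : b ≠ r) (hbk : b ≠ k) (hs : s < 3) :
    pat b r k s = b ↔ s = 0 := by
  unfold pat; interval_cases s <;> simp_all [Ne.symm hbr, Ne.symm hbk]

lemma pat_eq_r {b r k s : ℕ} (hbr : b ≠ r) (hrk : r ≠ k) (hs : s < 3) :
    pat b r k s = r ↔ s = 1 := by
  unfold pat; interval_cases s <;> simp_all [hbr, Ne.symm hrk]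

lemma pat_eq_k {b r k s : ℕ} (hbk : b ≠ k) (hrk : r ≠ k) (hs : s < 3) :
    pat b r k s = k ↔ s = 2 := by
  unfold pat; interval_cases s <;> simp_all [hbk, hrk]

lemma pat_ne {b r k : ℕ} (hbr : b ≠ r) (hbk : b ≠ k) (hrk : r ≠ k) {s s' : ℕ}
    (hs : s < 3) (hs' : s' < 3) (h : s ≠ s') : pat b r k s ≠ pat b r k s' := by
  unfold pat
  interval_cases s <;> interval_cases s' <;> simp_all [hbr, hbk, hrk, Ne.symm hbr, Ne.symm hbk, Ne.symm hrk]

lemma pat_mem (b r k s : ℕ) : pat b r k s = b ∨ pat b r k s = r ∨ pat b r k s = k := by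
  unfold pat; split_ifs <;> tauto

lemma prism_residue_ne {n : ℕ} (hn : 6 ≤ n) (hn3 : n % 3 = 0) (v w : Fin n × Fin 2)
    (hvw : (prism n).Adj v w) :
    (v.1.val + v.2.val) % 3 ≠ (w.1.val + w.2.val) % 3 := by
  rw [prism, SimpleGraph.fromRel_adj] at hvw
  obtain ⟨hne', hrel⟩ := hvw
  have hstep : ∀ u u' : Fin n × Fin 2,
      (u.1 = u'.1 ∧ u.2 ≠ u'.2) ∨ (u.2 = u'.2 ∧ u'.1.val = (u.1.val + 1) % n) →
      (u.1.val + u.2.val) % 3 ≠ (u'.1.val + u'.2.val) % 3 := by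
    rintro u u' (⟨h1, h2⟩ | ⟨h1, h2⟩)
    · have hv2 : u.2.val ≠ u'.2.val := fun h => h2 (Fin.val_injective h)
      have := u.2.isLt
      have := u'.2.isLt
      rw [h1]
      omega
    · rw [h1]
      have hlt := u.1.isLt
      rcases Nat.lt_or_ge (u.1.val + 1) n with h | h
      · rw [Nat.mod_eq_of_lt h] at h2
        rw [h2]; omega
      · have hu1 : u.1.val = n - 1 := by omega
        have : (u.1.val + 1) % n = 0 := by
          rw [show u.1.val + 1 = n by omega, Nat.mod_self]
        rw [this] at h2
        rw [h2, hu1]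
        omega
  rcases hrel with h | h
  · exact hstep v w h
  · exact (hstep w v h).symm


/-- Let `c` be a lex-min proper `L`-coloring of `Π_n` (`n ≥ 6`, `L` 3-uniform) whose
largest color class Blue (color `b`) has more than `⌈2n/3⌉` vertices, and let Red
(color `r`) be a largest class among the other colors.  If `|Red| = |Blue|` or
`|Red| = |Blue| − 1`, then every other color class has at most `|Red| − 2` vertices
(and hence at most `|Blue| − 2` vertices). -/
theorem lexmin_blue_red_close_other_classes_small (n : ℕ) (hn : 6 ≤ n)
    (L : Fin n × Fin 2 → Finset ℕ) (hL : ∀ v, (L v).card = 3)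
    (c : Fin n × Fin 2 → ℕ) (hc : IsLexMin L c) (b r : ℕ)
    (hbmax : ∀ k : ℕ, (colorClass c k).card ≤ (colorClass c b).card)
    (hbig : 2 * n ⌈/⌉ 3 < (colorClass c b).card)
    (hrb : r ≠ b)
    (hrmax : ∀ k : ℕ, k ≠ b → (colorClass c k).card ≤ (colorClass c r).card)
    (hcase : (colorClass c r).card = (colorClass c b).card ∨
      (colorClass c r).card + 1 = (colorClass c b).card) :
    ∀ k : ℕ, k ≠ b → k ≠ r →
      (colorClass c k).card + 2 ≤ (colorClass c r).card ∧
      (colorClass c k).card + 2 ≤ (colorClass c b).card := by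
  obtain ⟨⟨hmem, hadj⟩, hlex⟩ := hc
  intro k hkb hkr
  have hRleB : (colorClass c r).card ≤ (colorClass c b).card := hbmax r
  suffices hKR : (colorClass c k).card + 2 ≤ (colorClass c r).card by
    exact ⟨hKR, le_trans hKR hRleB⟩
  by_contra hcon
  push_neg at hcon
  set q := 2 * n ⌈/⌉ 3 with hq
  have hq3 : 2 * n ≤ 3 * q := by
    rw [hq, Nat.ceilDiv_eq_add_pred_div]
    have := Nat.div_add_mod (2*n + 3 - 1) 3
    omega
  have hKleR : (colorClass c k).card ≤ (colorClass c r).card := hrmax k hkb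
  -- disjointness and the counting bound
  have hdisj : ∀ a a' : ℕ, a ≠ a' → Disjoint (colorClass c a) (colorClass c a') := by
    intro a a' haa'
    rw [Finset.disjoint_left]
    intro v hv hv'
    simp only [colorClass, Finset.mem_filter] at hv hv'
    exact haa' (hv.2 ▸ hv'.2 ▸ rfl)
  have hcardU : (Finset.univ : Finset (Fin n × Fin 2)).card = 2 * n := by
    simp [mul_comm]
  have hsumcard : (colorClass c b ∪ colorClass c r ∪ colorClass c k).card
      = (colorClass c b).card + (colorClass c r).card + (colorClass c k).card := by
    rw [Finset.card_union_of_disjoint, Finset.card_union_of_disjoint (hdisj b r (Ne.symm hrb))]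
    rw [Finset.disjoint_union_left]
    exact ⟨hdisj b k (Ne.symm hkb), hdisj r k (Ne.symm hkr)⟩
  have hsum : (colorClass c b).card + (colorClass c r).card + (colorClass c k).card ≤ 2 * n := by
    rw [← hsumcard, ← hcardU]
    exact Finset.card_le_card (Finset.subset_univ _)
  -- dispatch the |R| = |B| case; in the remaining case everything is tight
  rcases hcase with hBR | hBR
  · omega
  have hB : (colorClass c b).card = q + 1 := by omega
  have hR : (colorClass c r).card = q := by omega
  have hK : (colorClass c k).card = q - 1 := by omega
  have h2n : 3 * q = 2 * n := by omega
  obtain ⟨m, hmq, hm2⟩ : ∃ m, q = m + 2 ∧ 2 ≤ m := ⟨q - 2, by omega, by omega⟩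
  have hn3 : n % 3 = 0 := by omega
  -- the three classes cover everything
  have hcover : ∀ w : Fin n × Fin 2, c w = b ∨ c w = r ∨ c w = k := by
    have hU : colorClass c b ∪ colorClass c r ∪ colorClass c k = Finset.univ := by
      apply Finset.eq_univ_of_card
      rw [hsumcard]
      simp only [Fintype.card_prod, Fintype.card_fin]
      omega
    intro w
    have : w ∈ colorClass c b ∪ colorClass c r ∪ colorClass c k := hU ▸ Finset.mem_univ w
    simp only [Finset.mem_union, colorClass, Finset.mem_filter, Finset.mem_univ, true_and] at this
    tauto
  -- nonemptiness witnesses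
  have hne : ∀ a : ℕ, 0 < (colorClass c a).card → ∃ w, c w = a := by
    intro a ha
    obtain ⟨w, hw⟩ := Finset.card_pos.mp ha
    simp only [colorClass, Finset.mem_filter, Finset.mem_univ, true_and] at hw
    exact ⟨w, hw⟩
  have hbrk_val : ({b, r, k} : Finset ℕ).val = b ::ₘ r ::ₘ k ::ₘ 0 := by
    rw [Finset.insert_val_of_notMem (by simp [Ne.symm hrb, Ne.symm hkb]),
      Finset.insert_val_of_notMem (by simp [Ne.symm hkr])]
    rfl
  -- the color word of c
  have himg : Finset.univ.image c = ({b, r, k} : Finset ℕ) := by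
    apply Finset.ext
    intro x
    simp only [Finset.mem_image, Finset.mem_univ, true_and, Finset.mem_insert,
      Finset.mem_singleton]
    constructor
    · rintro ⟨w, rfl⟩; exact hcover w
    · rintro (rfl | rfl | rfl)
      · obtain ⟨w, hw⟩ := hne x (by omega); exact ⟨w, hw⟩
      · obtain ⟨w, hw⟩ := hne x (by omega); exact ⟨w, hw⟩
      · obtain ⟨w, hw⟩ := hne x (by omega); exact ⟨w, hw⟩
  have hword : colorWord c = [m+1, m+2, m+3].reverse := by
    apply colorWord_eq_rev c _ (by simp; try omega)
    rw [himg, hbrk_val]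
    simp only [Multiset.map_cons, Multiset.map_zero]
    rw [hB, hR, hK, hmq]
    show ((m+2)+1 : ℕ) ::ₘ (m+2) ::ₘ ((m+2)-1) ::ₘ 0 = _
    rw [show (m+2)+1 = m+3 by ring, show (m+2)-1 = m+1 by omega]
    rfl
  -- case split: is there a vertex with a color outside {b, r, k} in its list?
  by_cases hlist : ∀ v : Fin n × Fin 2, ∀ x ∈ L v, x = b ∨ x = r ∨ x = k
  · -- all lists equal {b, r, k}: recolor by an equitable pattern coloring
    have hLv : ∀ v, L v = ({b, r, k} : Finset ℕ) := by
      intro v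
      apply Finset.eq_of_subset_of_card_le
      · intro x hx
        simp only [Finset.mem_insert, Finset.mem_singleton]
        exact hlist v x hx
      · calc ({b, r, k} : Finset ℕ).card ≤ ({r, k} : Finset ℕ).card + 1 :=
              Finset.card_insert_le _ _
          _ ≤ (({k} : Finset ℕ).card + 1) + 1 := by
              exact Nat.add_le_add_right (Finset.card_insert_le _ _) 1
          _ = 3 := by simp
          _ ≤ (L v).card := by rw [hL v]
    have hbr : b ≠ r := Ne.symm hrb
    have hbk : b ≠ k := Ne.symm hkb
    have hrk : r ≠ k := Ne.symm hkr
    set c₀ : Fin n × Fin 2 → ℕ := fun v => pat b r k ((v.1.val + v.2.val) % 3) with hc₀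
    have hres3 : ∀ v : Fin n × Fin 2, (v.1.val + v.2.val) % 3 < 3 :=
      fun v => Nat.mod_lt _ (by omega)
    have hc₀mem : ∀ v, c₀ v = b ∨ c₀ v = r ∨ c₀ v = k := fun v => pat_mem b r k _
    have hc₀proper : IsProperListColoring L c₀ := by
      constructor
      · intro v
        rw [hLv v]
        rcases hc₀mem v with h | h | h <;> simp [h]
      · intro v w hvw
        exact pat_ne hbr hbk hrk (hres3 v) (hres3 w) (prism_residue_ne hn hn3 v w hvw)
    have hclass₀ : ∀ a s, s < 3 →
        (∀ v : Fin n × Fin 2, c₀ v = a ↔ (v.1.val + v.2.val) % 3 = s) →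
        (colorClass c₀ a).card = m + 2 := by
      intro a s hs hiff
      have : colorClass c₀ a
          = Finset.univ.filter (fun v : Fin n × Fin 2 => (v.1.val + v.2.val) % 3 = s) := by
        apply Finset.filter_congr
        intro v _
        exact hiff v
      rw [this, card_pattern hn3 s hs]
      omega
    have hcb₀ := hclass₀ b 0 (by omega) (fun v => pat_eq_b hbr hbk (hres3 v))
    have hcr₀ := hclass₀ r 1 (by omega) (fun v => pat_eq_r hbr hrk (hres3 v))
    have hck₀ := hclass₀ k 2 (by omega) (fun v => pat_eq_k hbk hrk (hres3 v))
    have himg₀ : Finset.univ.image c₀ = ({b, r, k} : Finset ℕ) := by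
      apply Finset.ext
      intro x
      simp only [Finset.mem_image, Finset.mem_univ, true_and, Finset.mem_insert,
        Finset.mem_singleton]
      constructor
      · rintro ⟨w, rfl⟩; exact hc₀mem w
      · have hex : ∀ a : ℕ, 0 < (colorClass c₀ a).card → ∃ w, c₀ w = a := by
          intro a ha
          obtain ⟨w, hw⟩ := Finset.card_pos.mp ha
          simp only [colorClass, Finset.mem_filter, Finset.mem_univ, true_and] at hw
          exact ⟨w, hw⟩
        rintro (rfl | rfl | rfl)
        · exact hex x (by omega)
        · exact hex x (by omega)
        · exact hex x (by omega)
    have hword₀ : colorWord c₀ = [m+2, m+2, m+2].reverse := by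
      apply colorWord_eq_rev c₀ _ (by simp)
      rw [himg₀, hbrk_val]
      simp only [Multiset.map_cons, Multiset.map_zero]
      rw [hcb₀, hcr₀, hck₀]
      rfl
    exact hlex c₀ hc₀proper (by
      rw [hword, hword₀]
      exact List.Lex.rel (by omega))
  · -- some vertex has a color outside {b, r, k}: recolor that single vertex
    push_neg at hlist
    obtain ⟨v, x, hxL, hxb, hxr, hxk⟩ := hlist
    set c' : Fin n × Fin 2 → ℕ := Function.update c v x with hc'
    have hc'v : c' v = x := Function.update_self _ _ _
    have hc'w : ∀ w, w ≠ v → c' w = c w := fun w hw => Function.update_of_ne hw _ _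
    have hxne : ∀ w, c w ≠ x := by
      intro w hw
      rcases hcover w with h | h | h
      · exact hxb (hw ▸ h)
      · exact hxr (hw ▸ h)
      · exact hxk (hw ▸ h)
    have hc'proper : IsProperListColoring L c' := by
      constructor
      · intro w
        by_cases hwv : w = v
        · subst hwv; rw [hc'v]; exact hxL
        · rw [hc'w w hwv]; exact hmem w
      · intro w w' hww'
        have hne' : w ≠ w' := hww'.ne
        by_cases hwv : w = v
        · subst hwv
          rw [hc'v, hc'w w' (Ne.symm hne')]
          exact fun h => hxne w' h.symm
        · by_cases hw'v : w' = v
          · subst hw'v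
            rw [hc'v, hc'w w hwv]
            exact hxne w
          · rw [hc'w w hwv, hc'w w' hw'v]
            exact hadj w w' hww'
    -- classes of c'
    have hclass_other : ∀ a : ℕ, a ≠ x → a ≠ c v → colorClass c' a = colorClass c a := by
      intro a hax hacv
      apply Finset.ext
      intro w
      simp only [colorClass, Finset.mem_filter, Finset.mem_univ, true_and]
      by_cases hwv : w = v
      · subst hwv
        rw [hc'v]
        constructor
        · intro h; exact absurd h.symm hax
        · intro h; exact absurd h.symm hacv
      · rw [hc'w w hwv]
    have hclass_cv : colorClass c' (c v) = (colorClass c (c v)).erase v := by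
      apply Finset.ext
      intro w
      simp only [colorClass, Finset.mem_filter, Finset.mem_univ, true_and, Finset.mem_erase]
      by_cases hwv : w = v
      · subst hwv
        rw [hc'v]
        constructor
        · intro h; exact absurd h.symm (hxne w)
        · intro h; exact absurd rfl h.1
      · rw [hc'w w hwv]
        tauto
    have hcard_cv : (colorClass c' (c v)).card = (colorClass c (c v)).card - 1 := by
      rw [hclass_cv, Finset.card_erase_of_mem]
      simp [colorClass]
    have hclass_x : colorClass c' x = {v} := by
      apply Finset.ext
      intro w
      simp only [colorClass, Finset.mem_filter, Finset.mem_univ, true_and, Finset.mem_singleton]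
      by_cases hwv : w = v
      · subst hwv; rw [hc'v]; simp
      · rw [hc'w w hwv]
        exact ⟨fun h => absurd h (hxne w), fun h => absurd h hwv⟩
    have hcard_x : (colorClass c' x).card = 1 := by rw [hclass_x]; rfl
    have hc'mem : ∀ w, c' w = b ∨ c' w = r ∨ c' w = k ∨ c' w = x := by
      intro w
      by_cases hwv : w = v
      · subst hwv; rw [hc'v]; exact Or.inr (Or.inr (Or.inr rfl))
      · rw [hc'w w hwv]
        rcases hcover w with h | h | h
        · exact Or.inl h
        · exact Or.inr (Or.inl h)
        · exact Or.inr (Or.inr (Or.inl h))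
    have himg' : Finset.univ.image c' = ({b, r, k, x} : Finset ℕ) := by
      apply Finset.ext
      intro y
      simp only [Finset.mem_image, Finset.mem_univ, true_and, Finset.mem_insert,
        Finset.mem_singleton]
      constructor
      · rintro ⟨w, rfl⟩
        exact hc'mem w
      · have hex : ∀ a : ℕ, 0 < (colorClass c' a).card → ∃ w, c' w = a := by
          intro a ha
          obtain ⟨w, hw⟩ := Finset.card_pos.mp ha
          simp only [colorClass, Finset.mem_filter, Finset.mem_univ, true_and] at hw
          exact ⟨w, hw⟩
        have hcard_ge : ∀ a : ℕ, a ≠ x → 2 ≤ (colorClass c a).card →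
            0 < (colorClass c' a).card := by
          intro a hax ha
          by_cases hacv : a = c v
          · subst hacv; omega
          · rw [hclass_other a hax hacv] at *; omega
        rintro (rfl | rfl | rfl | rfl)
        · exact hex y (hcard_ge y hxb.symm (by omega))
        · exact hex y (hcard_ge y hxr.symm (by omega))
        · exact hex y (hcard_ge y hxk.symm (by omega))
        · exact hex y (by omega)
    have hbrkx_val : ({b, r, k, x} : Finset ℕ).val = b ::ₘ r ::ₘ k ::ₘ x ::ₘ 0 := by
      rw [Finset.insert_val_of_notMem (by simp [Ne.symm hrb, Ne.symm hkb, Ne.symm hxb]),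
        Finset.insert_val_of_notMem (by simp [Ne.symm hkr, Ne.symm hxr]),
        Finset.insert_val_of_notMem (by simp [Ne.symm hxk])]
      rfl
    -- now case on the color of v
    rcases hcover v with hcv | hcv | hcv
    · -- v was blue: word becomes [m+2, m+2, m+1, 1]
      have hword' : colorWord c' = [1, m+1, m+2, m+2].reverse := by
        apply colorWord_eq_rev c' _ (by simp; try omega)
        rw [himg', hbrkx_val]
        simp only [Multiset.map_cons, Multiset.map_zero]
        rw [hclass_other r hxr.symm (by rw [hcv]; exact hrb),
          hclass_other k hxk.symm (by rw [hcv]; exact hkb)]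
        rw [show (colorClass c' b).card = (colorClass c b).card - 1 by
          rw [← hcv] at hB ⊢; rw [hcard_cv]]
        rw [hcard_x, hB, hR, hK, hmq]
        rw [show (m+2)+1-1 = m+2 by omega, show (m+2)-1 = m+1 by omega]
        rfl
      exact hlex c' hc'proper (by
        rw [hword, hword']
        exact List.Lex.rel (by omega))
    · -- v was red: word becomes [m+3, m+1, m+1, 1]
      have hword' : colorWord c' = [1, m+1, m+1, m+3].reverse := by
        apply colorWord_eq_rev c' _ (by simp; try omega)
        rw [himg', hbrkx_val]
        simp only [Multiset.map_cons, Multiset.map_zero]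
        rw [hclass_other b hxb.symm (by rw [hcv]; exact Ne.symm hrb),
          hclass_other k hxk.symm (by rw [hcv]; exact hkr)]
        rw [show (colorClass c' r).card = (colorClass c r).card - 1 by
          rw [← hcv] at hR ⊢; rw [hcard_cv]]
        rw [hcard_x, hB, hR, hK, hmq]
        rw [show (m+2)+1 = m+3 by ring, show (m+2)-1 = m+1 by omega]
        rfl
      exact hlex c' hc'proper (by
        rw [hword, hword']
        exact List.Lex.cons (List.Lex.rel (by omega)))
    · -- v was in the k class: word becomes [m+3, m+2, m, 1]
      have hword' : colorWord c' = [1, m, m+2, m+3].reverse := by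
        apply colorWord_eq_rev c' _ (by simp; try omega)
        rw [himg', hbrkx_val]
        simp only [Multiset.map_cons, Multiset.map_zero]
        rw [hclass_other b hxb.symm (by rw [hcv]; exact Ne.symm hkb),
          hclass_other r hxr.symm (by rw [hcv]; exact Ne.symm hkr)]
        rw [show (colorClass c' k).card = (colorClass c k).card - 1 by
          rw [← hcv] at hK ⊢; rw [hcard_cv]]
        rw [hcard_x, hB, hR, hK, hmq]
        rw [show (m+2)+1 = m+3 by ring, show (m+2)-1-1 = m by omega]
        rfl
      exact hlex c' hc'proper (by
        rw [hword, hword']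
        exact List.Lex.cons (List.Lex.cons (List.Lex.rel (by omega))))
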